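/- Let X be a martingale with X(r) measurable w.r.t. 𝓕_r, let z* ∈ ℝ, and let A = {X(t) = z*} ∈ 𝓕_t. Set V_r = E[(X(t) − z*)² | 𝓕_r] and P_r = P(A | 𝓕_r). Then (X(r) − z*)² ≤ V_r·(1 − P_r) almost surely. -/

import Mathlib

open MeasureTheory

lemma key_sq_le (u V P : ℝ) (hV : 0 ≤ V) (hP : 0 ≤ P)
    (h : ∀ q : ℚ, 0 < q → 2 * |u| ≤ q * V + P / q) : u ^ 2 ≤ V * P := by
  by_contra hc
  push_neg at hc
  have hu : 0 < |u| := by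
    rcases eq_or_ne u 0 with h0 | h0
    · simp [h0] at hc; nlinarith
    · exact abs_pos.mpr h0
  rcases eq_or_lt_of_le hV with hV0 | hV0
  · obtain ⟨q, hq⟩ := exists_rat_gt (max (P / (2 * |u|)) 0)
    have hq0 : (0:ℝ) < q := lt_of_le_of_lt (le_max_right _ _) hq
    have h1 := h q (by exact_mod_cast hq0)
    have h2 : P / (2 * |u|) < q := lt_of_le_of_lt (le_max_left _ _) hq
    have h3 : P < q * (2 * |u|) := (div_lt_iff₀ (by positivity)).mp h2
    have h4 : P / q < 2 * |u| := (div_lt_iff₀ hq0).mpr (by nlinarith)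
    nlinarith
  · set s := Real.sqrt (P * V) with hs
    have hs0 : 0 ≤ s := Real.sqrt_nonneg _
    have hss : s ^ 2 = P * V := Real.sq_sqrt (by positivity)
    have hsu : s < |u| := by nlinarith [sq_abs u]
    obtain ⟨q, hq1, hq2⟩ := exists_rat_btwn
      (show s / V < (2 * |u| - s) / V from (div_lt_div_iff_of_pos_right hV0).mpr (by linarith))
    have hq0 : (0:ℝ) < q := lt_of_le_of_lt (by positivity) hq1
    have hqV : (q:ℝ) * V < 2 * |u| - s := (lt_div_iff₀ hV0).mp hq2
    have hPq : P / q ≤ s := by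
      rcases eq_or_lt_of_le hP with hP0 | hP0
      · rw [← hP0, zero_div]; simpa using hs0
      · have hsp : 0 < s := by positivity
        have h5 : s < q * V := (div_lt_iff₀ hV0).mp hq1
        rw [div_le_iff₀ hq0]
        nlinarith
    have := h q (by exact_mod_cast hq0)
    linarith

lemma aux_indicator_integrable {Ω : Type*} [MeasurableSpace Ω] (μ : Measure Ω)
    [IsFiniteMeasure μ] {s : Set Ω} (hs : MeasurableSet s) :
    Integrable (s.indicator fun _ => (1:ℝ)) μ :=
  (integrable_const 1).indicator hs

theorem stmt_9 {Ω : Type*} {mΩ : MeasurableSpace Ω} (μ : Measure Ω) [IsProbabilityMeasure μ]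
    (m : MeasurableSpace Ω) (hm : m ≤ mΩ) (Xt Xr : Ω → ℝ) (z : ℝ)
    (hL2 : MemLp Xt 2 μ)
    (hmart : Xr =ᵐ[μ] μ[Xt | m]) :
    ∀ᵐ ω ∂μ, (Xr ω - z) ^ 2 ≤
      (μ[fun ω' => (Xt ω' - z) ^ 2 | m]) ω *
        (1 - (μ[Set.indicator {ω' | Xt ω' = z} (fun _ => (1:ℝ)) | m]) ω) := by
  set Y : Ω → ℝ := fun ω => Xt ω - z with hYdef
  set ia : Ω → ℝ := Set.indicator {ω' | Xt ω' = z} (fun _ => (1:ℝ)) with hiadef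
  set ic : Ω → ℝ := fun ω => 1 - ia ω with hicdef
  have hY2 : MemLp Y 2 μ := hL2.sub (memLp_const z)
  have hYint : Integrable Y μ := hY2.integrable one_le_two
  have hYsq : Integrable (fun ω => Y ω ^ 2) μ := hY2.integrable_sq
  -- integrability of the indicator
  obtain ⟨g, hg, hXg⟩ := hL2.aestronglyMeasurable
  have hmeasg : MeasurableSet[mΩ] (g ⁻¹' {z}) := hg.measurable (measurableSet_singleton z)
  have hAg : ia =ᵐ[μ] (g ⁻¹' {z}).indicator (fun _ => (1:ℝ)) := by
    filter_upwards [hXg] with ω hω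
    by_cases h : g ω = z <;>
      simp [hiadef, Set.indicator_apply, Set.mem_setOf_eq, Set.mem_preimage,
        Set.mem_singleton_iff, hω, h]
  have hia_int : Integrable ia μ := by
    have h1 : Integrable ((g ⁻¹' {z}).indicator fun _ => (1:ℝ)) μ :=
      @aux_indicator_integrable Ω mΩ μ _ _ hmeasg
    exact h1.congr hAg.symm
  have hic_int : Integrable ic μ := (integrable_const 1).sub hia_int
  -- notation for conditional expectations
  set u : Ω → ℝ := μ[Y | m] with hudef
  set V : Ω → ℝ := μ[fun ω => Y ω ^ 2 | m] with hVdef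
  set Pa : Ω → ℝ := μ[ia | m] with hPadef
  set Pc : Ω → ℝ := μ[ic | m] with hPcdef
  -- Xr - z = u a.e.
  have hsub : μ[Xt - (fun _ => z) | m] =ᵐ[μ] μ[Xt | m] - μ[(fun _ => z : Ω → ℝ) | m] :=
    condExp_sub (hL2.integrable one_le_two) (integrable_const z) m
  have hXrz : (fun ω => Xr ω - z) =ᵐ[μ] u := by
    have hconst : μ[(fun _ => z : Ω → ℝ) | m] = fun _ => z := condExp_const hm z
    filter_upwards [hmart, hsub] with ω h1 h2
    have : u ω = (μ[Xt | m]) ω - z := by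
      have : (Xt - fun _ => z) = Y := rfl
      rw [hudef, ← this, h2]; simp [hconst]
    rw [this, h1]
  -- Pc = 1 - Pa a.e.
  have hPc_eq : Pc =ᵐ[μ] fun ω => 1 - Pa ω := by
    have h1 : μ[(fun _ => (1:ℝ)) - ia | m] =ᵐ[μ] μ[(fun _ => (1:ℝ)) | m] - μ[ia | m] :=
      condExp_sub (integrable_const 1) hia_int m
    have hconst : μ[(fun _ => (1:ℝ) : Ω → ℝ) | m] = fun _ => 1 := condExp_const hm 1
    have : ic = (fun _ => (1:ℝ)) - ia := rfl
    rw [hPcdef, this]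
    filter_upwards [h1] with ω h2
    rw [h2]; simp [hconst, hPadef]
  -- nonnegativity
  have hVnn : ∀ᵐ ω ∂μ, 0 ≤ V ω := condExp_nonneg (ae_of_all _ fun ω => sq_nonneg _)
  have hPcnn : ∀ᵐ ω ∂μ, 0 ≤ Pc ω := by
    refine condExp_nonneg (ae_of_all _ fun ω => ?_)
    simp only [hicdef, Pi.zero_apply, sub_nonneg, hiadef, Set.indicator_apply]
    split <;> norm_num
  -- per-q inequality
  have Hq : ∀ q : ℚ, 0 < q → ∀ᵐ ω ∂μ, 2 * |u ω| ≤ (q:ℝ) * V ω + Pc ω / q := by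
    intro q hq
    have hq' : (0:ℝ) < q := by exact_mod_cast hq
    have hpt : ∀ ω, 2 * Y ω ≤ (q:ℝ) * Y ω ^ 2 + ic ω / q := by
      intro ω
      by_cases hωA : Xt ω = z
      · have hY0 : Y ω = 0 := by simp [hYdef, hωA]
        have : ic ω = 0 := by simp [hicdef, hiadef, Set.indicator_apply, hωA]
        rw [hY0, this]; simp
      · have : ic ω = 1 := by simp [hicdef, hiadef, Set.indicator_apply, hωA]
        rw [this]
        have expand : ((q:ℝ) * Y ω - 1) ^ 2 / q = q * Y ω ^ 2 - 2 * Y ω + 1 / q := by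
          field_simp; ring
        have h0 : 0 ≤ ((q:ℝ) * Y ω - 1) ^ 2 / q := by positivity
        linarith
    have hpt' : ∀ ω, 2 * (-Y ω) ≤ (q:ℝ) * Y ω ^ 2 + ic ω / q := by
      intro ω
      by_cases hωA : Xt ω = z
      · have hY0 : Y ω = 0 := by simp [hYdef, hωA]
        have : ic ω = 0 := by simp [hicdef, hiadef, Set.indicator_apply, hωA]
        rw [hY0, this]; simp
      · have : ic ω = 1 := by simp [hicdef, hiadef, Set.indicator_apply, hωA]
        rw [this]
        have expand : ((q:ℝ) * Y ω + 1) ^ 2 / q = q * Y ω ^ 2 + 2 * Y ω + 1 / q := by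
          field_simp; ring
        have h0 : 0 ≤ ((q:ℝ) * Y ω + 1) ^ 2 / q := by positivity
        linarith
    have hgint : Integrable (fun ω => (q:ℝ) * Y ω ^ 2 + ic ω / q) μ :=
      (hYsq.const_mul q).add (hic_int.div_const q)
    have h1 : μ[(fun ω => 2 * Y ω) | m] ≤ᵐ[μ] μ[(fun ω => (q:ℝ) * Y ω ^ 2 + ic ω / q) | m] :=
      condExp_mono (hYint.const_mul 2) hgint (ae_of_all _ hpt)
    have h2 : μ[(fun ω => 2 * (-Y ω)) | m] ≤ᵐ[μ] μ[(fun ω => (q:ℝ) * Y ω ^ 2 + ic ω / q) | m] :=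
      condExp_mono ((hYint.neg).const_mul 2) hgint (ae_of_all _ hpt')
    -- identify the condexps
    have e1 : μ[(fun ω => 2 * Y ω) | m] =ᵐ[μ] fun ω => 2 * u ω := by
      have hsf : (fun ω => 2 * Y ω) = (2:ℝ) • Y := by funext ω; simp
      rw [hsf]
      filter_upwards [condExp_smul (μ := μ) (m := m) (2:ℝ) Y] with ω h
      simpa using h
    have e1' : μ[(fun ω => 2 * (-Y ω)) | m] =ᵐ[μ] fun ω => 2 * (-(u ω)) := by
      have hsf : (fun ω => 2 * (-Y ω)) = (-2:ℝ) • Y := by funext ω; simp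
      rw [hsf]
      filter_upwards [condExp_smul (μ := μ) (m := m) (-2:ℝ) Y] with ω h
      rw [h]; simp [hudef]
    have e2 : μ[(fun ω => (q:ℝ) * Y ω ^ 2 + ic ω / q) | m] =ᵐ[μ]
        fun ω => (q:ℝ) * V ω + Pc ω / q := by
      have hsplit : (fun ω => (q:ℝ) * Y ω ^ 2 + ic ω / q)
          = (fun ω => (q:ℝ) * Y ω ^ 2) + fun ω => ic ω / q := rfl
      rw [hsplit]
      have ha := condExp_add (μ := μ) (m := m) (hYsq.const_mul q) (hic_int.div_const q)
      have hb : μ[(fun ω => (q:ℝ) * Y ω ^ 2) | m] =ᵐ[μ] fun ω => (q:ℝ) * V ω := by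
        have hsf : (fun ω => (q:ℝ) * Y ω ^ 2) = (q:ℝ) • fun ω => Y ω ^ 2 := by funext ω; simp
        rw [hsf]
        filter_upwards [condExp_smul (μ := μ) (m := m) ((q:ℝ)) (fun ω => Y ω ^ 2)] with ω h
        simpa [hVdef] using h
      have hc : μ[(fun ω => ic ω / q) | m] =ᵐ[μ] fun ω => Pc ω / q := by
        have hsf : (fun ω => ic ω / q) = ((q:ℝ)⁻¹) • ic := by
          funext ω; simp [div_eq_inv_mul]
        rw [hsf]
        filter_upwards [condExp_smul (μ := μ) (m := m) ((q:ℝ)⁻¹) ic] with ω h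
        rw [h]; simp [div_eq_inv_mul, hPcdef]
      filter_upwards [ha, hb, hc] with ω h1 h2 h3
      rw [h1]; simp only [Pi.add_apply]; rw [h2, h3]
    filter_upwards [h1, h2, e1, e1', e2] with ω k1 k2 k3 k4 k5
    rw [k3, k5] at k1
    rw [k4, k5] at k2
    rcases abs_cases (u ω) with ⟨h, _⟩ | ⟨h, _⟩ <;> rw [h] <;> linarith
  have Hall : ∀ᵐ ω ∂μ, ∀ q : ℚ, 0 < q → 2 * |u ω| ≤ (q:ℝ) * V ω + Pc ω / q := by
    rw [ae_all_iff]
    intro q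
    by_cases hq : 0 < q
    · filter_upwards [Hq q hq] with ω h _; exact h
    · exact ae_of_all _ fun ω hq' => absurd hq' hq
  filter_upwards [hXrz, hPc_eq, hVnn, hPcnn, Hall] with ω h1 h2 h3 h4 h5
  have key := key_sq_le (u ω) (V ω) (Pc ω) h3 h4 h5
  have h6 : (Xr ω - z) = u ω := h1
  rw [h6]
  calc u ω ^ 2 ≤ V ω * Pc ω := key
    _ = V ω * (1 - Pa ω) := by rw [h2]
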